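/- If for every producer p the point (v_p*, η_p*, μ_p*) satisfies the individual KKT system −E[π_p] − λ_p Q_p v_p* − B_p^⊤ η_p* − A_p^⊤ μ_p* = 0, η_p*^⊤(B_p v_p* − b_p) = 0, B_p v_p* ≤ b_p, A_p v_p* = a_p, η_p* ≥ 0 (and similarly for each consumer c), and the market clearing Σ_c V_c* + Σ_p V_p* = 0 holds, then the concatenated point x* = (v*, E[Π]*) with stacked multipliers η* = (η_k*)_k, μ* = ((μ_k*)_k, μ_M* = 0) satisfies the aggregated KKT system −π − Q x* − B^⊤ η* − A^⊤ μ* = 0, η*^⊤(B x* − b) = 0, B x* ≤ b, A x* = a, η* ≥ 0, μ_M* = 0, where A, B, Q, π, a, b are the block matrices/vectors formed as in the paper (with Q containing the coupling blocks M_p and I to E[Π], and A containing the market clearing row). Conversely, any solution of the aggregated system yields solutions of the individual systems plus market clearing. -/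
import Mathlib


open Matrix BigOperators

/-- Concatenated equality-constraint matrix `A` of Section 4:
block diagonal in the `A k` with an extra bottom block row
`[M_{p_1}, …, M_{p_P}, I, …, I, 0]` (market clearing row). -/
def bigA {m N : ℕ} {n q : Fin m → ℕ}
    (A : ∀ k, Matrix (Fin (q k)) (Fin (n k)) ℝ)
    (M : ∀ k, Matrix (Fin N) (Fin (n k)) ℝ) :
    Matrix ((Σ k : Fin m, Fin (q k)) ⊕ Fin N)
      ((Σ k : Fin m, Fin (n k)) ⊕ Fin N) ℝ :=
  Matrix.of fun rw cl =>
    match rw, cl with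
    | Sum.inl ⟨k, r⟩, Sum.inl ⟨k', j⟩ => if h : k' = k then A k r (h ▸ j) else 0
    | Sum.inl _, Sum.inr _ => 0
    | Sum.inr rN, Sum.inl ⟨k, j⟩ => (M k) rN j
    | Sum.inr _, Sum.inr _ => 0

/-- Concatenated inequality-constraint matrix `B`: block diagonal in the `B k`,
with zero columns corresponding to the price variable. -/
def bigB {m N : ℕ} {n s : Fin m → ℕ}
    (B : ∀ k, Matrix (Fin (s k)) (Fin (n k)) ℝ) :
    Matrix (Σ k : Fin m, Fin (s k))
      ((Σ k : Fin m, Fin (n k)) ⊕ Fin N) ℝ :=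
  Matrix.of fun rw cl =>
    match rw, cl with
    | ⟨k, r⟩, Sum.inl ⟨k', j⟩ => if h : k' = k then B k r (h ▸ j) else 0
    | _, Sum.inr _ => 0

/-- Concatenated quadratic-form matrix `Q` of Section 4: block diagonal in the
`λ_k Q_k`, coupled to the price block through `M_k^⊤` / `M_k`, zero
bottom-right block. -/
def bigQ {m N : ℕ} {n : Fin m → ℕ} (lam : Fin m → ℝ)
    (Qk : ∀ k, Matrix (Fin (n k)) (Fin (n k)) ℝ)
    (M : ∀ k, Matrix (Fin N) (Fin (n k)) ℝ) :
    Matrix ((Σ k : Fin m, Fin (n k)) ⊕ Fin N)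
      ((Σ k : Fin m, Fin (n k)) ⊕ Fin N) ℝ :=
  Matrix.of fun rw cl =>
    match rw, cl with
    | Sum.inl ⟨k, i⟩, Sum.inl ⟨k', j⟩ =>
        if h : k' = k then lam k * Qk k i (h ▸ j) else 0
    | Sum.inl ⟨k, i⟩, Sum.inr r => (M k) r i
    | Sum.inr r, Sum.inl ⟨k, j⟩ => (M k) r j
    | Sum.inr _, Sum.inr _ => 0

section Helpers

variable {m N : ℕ} {n q s : Fin m → ℕ}

lemma dite_block_sum {n : Fin m → ℕ} {k : Fin m}
    (f : ∀ k', Fin (n k') → ℝ) (g : Fin (n k) → ℝ) :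
    ∑ p : Σ k' : Fin m, Fin (n k'),
      (if h : p.1 = k then g (h ▸ p.2) else 0) * f p.1 p.2
      = ∑ j, g j * f k j := by
  rw [← Finset.univ_sigma_univ, Finset.sum_sigma]
  rw [Finset.sum_eq_single_of_mem k (Finset.mem_univ k)]
  · simp
  · intro k' _ hk'
    simp [hk']

variable (A : ∀ k, Matrix (Fin (q k)) (Fin (n k)) ℝ)
    (B : ∀ k, Matrix (Fin (s k)) (Fin (n k)) ℝ)
    (M : ∀ k, Matrix (Fin N) (Fin (n k)) ℝ)
    (lam : Fin m → ℝ)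
    (Qk : ∀ k, Matrix (Fin (n k)) (Fin (n k)) ℝ)
    (v : ∀ k, Fin (n k) → ℝ) (Pe : Fin N → ℝ)
    (η : ∀ k, Fin (s k) → ℝ) (μk : ∀ k, Fin (q k) → ℝ) (μM : Fin N → ℝ)

lemma bigQ_mulVec_inl (k : Fin m) (i : Fin (n k)) :
    ((bigQ lam Qk M).mulVec (Sum.elim (fun pr => v pr.1 pr.2) Pe)) (Sum.inl ⟨k, i⟩)
      = lam k * ((Qk k).mulVec (v k)) i + ((M k)ᵀ.mulVec Pe) i := by
  simp only [mulVec, dotProduct, Fintype.sum_sum_type, Sum.elim_inl, Sum.elim_inr]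
  congr 1
  · rw [show (∑ p : Σ k' : Fin m, Fin (n k'),
        (bigQ lam Qk M) (Sum.inl ⟨k, i⟩) (Sum.inl p) * v p.1 p.2)
      = ∑ p : Σ k' : Fin m, Fin (n k'),
        (if h : p.1 = k then lam k * Qk k i (h ▸ p.2) else 0) * v p.1 p.2 from rfl]
    rw [dite_block_sum (fun k' j => v k' j) (fun j => lam k * Qk k i j)]
    simp [Finset.mul_sum, mul_assoc]

lemma bigQ_mulVec_inr (r : Fin N) :
    ((bigQ lam Qk M).mulVec (Sum.elim (fun pr => v pr.1 pr.2) Pe)) (Sum.inr r)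
      = ∑ k, ((M k).mulVec (v k)) r := by
  simp only [mulVec, dotProduct, Fintype.sum_sum_type, Sum.elim_inl, Sum.elim_inr]
  rw [show (∑ p : Σ k' : Fin m, Fin (n k'),
      (bigQ lam Qk M) (Sum.inr r) (Sum.inl p) * v p.1 p.2)
    = ∑ p : Σ k' : Fin m, Fin (n k'), M p.1 r p.2 * v p.1 p.2 from rfl]
  have : ∑ j : Fin N, (bigQ lam Qk M) (Sum.inr r) (Sum.inr j) * Pe j = 0 := by
    apply Finset.sum_eq_zero; intro j _; show (0 : ℝ) * Pe j = 0; simp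
  rw [this, ← Finset.univ_sigma_univ, Finset.sum_sigma]
  simp [mulVec, dotProduct]

lemma bigB_transpose_mulVec_inl (k : Fin m) (i : Fin (n k)) :
    ((bigB B (N := N))ᵀ.mulVec (fun pr => η pr.1 pr.2)) (Sum.inl ⟨k, i⟩)
      = ((B k)ᵀ.mulVec (η k)) i := by
  simp only [mulVec, dotProduct, transpose_apply]
  rw [show (∑ p : Σ k' : Fin m, Fin (s k'),
      (bigB B (N := N)) p (Sum.inl ⟨k, i⟩) * η p.1 p.2)
    = ∑ p : Σ k' : Fin m, Fin (s k'),
      (if h : k = p.1 then B p.1 p.2 (h ▸ i) * η p.1 p.2 else 0) from ?_]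
  · rw [← Finset.univ_sigma_univ, Finset.sum_sigma]
    rw [Finset.sum_eq_single_of_mem k (Finset.mem_univ k)]
    · simp [mul_comm]
    · intro k' _ hk'
      exact Finset.sum_eq_zero fun r _ => dif_neg (fun h => hk' h.symm)
  · refine Finset.sum_congr rfl fun p _ => ?_
    rcases p with ⟨k', r⟩
    show (if h : k = k' then B k' r (h ▸ i) else 0) * η k' r = _
    by_cases h : k = k'
    · subst h; simp
    · simp [h]

lemma bigB_transpose_mulVec_inr (r : Fin N) :
    ((bigB B (N := N))ᵀ.mulVec (fun pr => η pr.1 pr.2)) (Sum.inr r) = 0 := by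
  simp only [mulVec, dotProduct, transpose_apply]
  apply Finset.sum_eq_zero
  intro p _
  rcases p with ⟨k, j⟩
  show (0 : ℝ) * η k j = 0
  simp

lemma bigA_transpose_mulVec_inl (k : Fin m) (i : Fin (n k)) :
    ((bigA A M)ᵀ.mulVec (Sum.elim (fun pr => μk pr.1 pr.2) μM)) (Sum.inl ⟨k, i⟩)
      = ((A k)ᵀ.mulVec (μk k)) i + ((M k)ᵀ.mulVec μM) i := by
  simp only [mulVec, dotProduct, transpose_apply, Fintype.sum_sum_type,
    Sum.elim_inl, Sum.elim_inr]
  congr 1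
  rw [show (∑ p : Σ k' : Fin m, Fin (q k'),
      (bigA A M) (Sum.inl p) (Sum.inl ⟨k, i⟩) * μk p.1 p.2)
    = ∑ p : Σ k' : Fin m, Fin (q k'),
      (if h : k = p.1 then A p.1 p.2 (h ▸ i) * μk p.1 p.2 else 0) from ?_]
  · rw [← Finset.univ_sigma_univ, Finset.sum_sigma]
    rw [Finset.sum_eq_single_of_mem k (Finset.mem_univ k)]
    · simp [mul_comm]
    · intro k' _ hk'
      exact Finset.sum_eq_zero fun r _ => dif_neg (fun h => hk' h.symm)
  · refine Finset.sum_congr rfl fun p _ => ?_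
    rcases p with ⟨k', r⟩
    show (if h : k = k' then A k' r (h ▸ i) else 0) * μk k' r = _
    by_cases h : k = k'
    · subst h; simp
    · simp [h]

lemma bigA_transpose_mulVec_inr (r : Fin N) :
    ((bigA A M)ᵀ.mulVec (Sum.elim (fun pr => μk pr.1 pr.2) μM)) (Sum.inr r) = 0 := by
  simp only [mulVec, dotProduct, transpose_apply, Fintype.sum_sum_type,
    Sum.elim_inl, Sum.elim_inr]
  rw [Finset.sum_eq_zero, Finset.sum_eq_zero]
  · simp
  · intro j _; show (0 : ℝ) * μM j = 0; simp
  · intro p _; rcases p with ⟨k, j⟩; show (0 : ℝ) * μk k j = 0; simp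

lemma bigB_mulVec (k : Fin m) (r : Fin (s k)) :
    ((bigB B (N := N)).mulVec (Sum.elim (fun pr => v pr.1 pr.2) Pe)) ⟨k, r⟩
      = ((B k).mulVec (v k)) r := by
  simp only [mulVec, dotProduct, Fintype.sum_sum_type, Sum.elim_inl, Sum.elim_inr]
  rw [show (∑ p : Σ k' : Fin m, Fin (n k'),
      (bigB B (N := N)) ⟨k, r⟩ (Sum.inl p) * v p.1 p.2)
    = ∑ p : Σ k' : Fin m, Fin (n k'),
      (if h : p.1 = k then B k r (h ▸ p.2) else 0) * v p.1 p.2 from rfl]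
  rw [dite_block_sum (fun k' j => v k' j) (fun j => B k r j)]
  have : ∑ j : Fin N, (bigB B (N := N)) ⟨k, r⟩ (Sum.inr j) * Pe j = 0 := by
    apply Finset.sum_eq_zero; intro j _; show (0 : ℝ) * Pe j = 0; simp
  rw [this]
  simp [mulVec, dotProduct]

lemma bigA_mulVec_inl (k : Fin m) (r : Fin (q k)) :
    ((bigA A M).mulVec (Sum.elim (fun pr => v pr.1 pr.2) Pe)) (Sum.inl ⟨k, r⟩)
      = ((A k).mulVec (v k)) r := by
  simp only [mulVec, dotProduct, Fintype.sum_sum_type, Sum.elim_inl, Sum.elim_inr]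
  rw [show (∑ p : Σ k' : Fin m, Fin (n k'),
      (bigA A M) (Sum.inl ⟨k, r⟩) (Sum.inl p) * v p.1 p.2)
    = ∑ p : Σ k' : Fin m, Fin (n k'),
      (if h : p.1 = k then A k r (h ▸ p.2) else 0) * v p.1 p.2 from rfl]
  rw [dite_block_sum (fun k' j => v k' j) (fun j => A k r j)]
  have : ∑ j : Fin N, (bigA A M) (Sum.inl ⟨k, r⟩) (Sum.inr j) * Pe j = 0 := by
    apply Finset.sum_eq_zero; intro j _; show (0 : ℝ) * Pe j = 0; simp
  rw [this]
  simp [mulVec, dotProduct]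

lemma bigA_mulVec_inr (r : Fin N) :
    ((bigA A M).mulVec (Sum.elim (fun pr => v pr.1 pr.2) Pe)) (Sum.inr r)
      = ∑ k, ((M k).mulVec (v k)) r := by
  simp only [mulVec, dotProduct, Fintype.sum_sum_type, Sum.elim_inl, Sum.elim_inr]
  rw [show (∑ p : Σ k' : Fin m, Fin (n k'),
      (bigA A M) (Sum.inr r) (Sum.inl p) * v p.1 p.2)
    = ∑ p : Σ k' : Fin m, Fin (n k'), M p.1 r p.2 * v p.1 p.2 from rfl]
  have : ∑ j : Fin N, (bigA A M (n := n)) (Sum.inr r) (Sum.inr j) * Pe j = 0 := by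
    apply Finset.sum_eq_zero; intro j _; show (0 : ℝ) * Pe j = 0; simp
  rw [this, ← Finset.univ_sigma_univ, Finset.sum_sigma]
  simp [mulVec, dotProduct]

end Helpers

lemma big_comp_sum {m N : ℕ} {n s : Fin m → ℕ}
    (B : ∀ k, Matrix (Fin (s k)) (Fin (n k)) ℝ) (b : ∀ k, Fin (s k) → ℝ)
    (v : ∀ k, Fin (n k) → ℝ) (Pe : Fin N → ℝ) (η : ∀ k, Fin (s k) → ℝ) :
    (fun pr : Σ k : Fin m, Fin (s k) => η pr.1 pr.2) ⬝ᵥ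
      ((bigB B (N := N)).mulVec (Sum.elim (fun pr => v pr.1 pr.2) Pe)
        - fun pr => b pr.1 pr.2)
      = ∑ k, η k ⬝ᵥ ((B k).mulVec (v k) - b k) := by
  simp only [dotProduct, Pi.sub_apply]
  rw [← Finset.univ_sigma_univ, Finset.sum_sigma]
  refine Finset.sum_congr rfl fun k _ => Finset.sum_congr rfl fun r _ => ?_
  rw [bigB_mulVec]

/-- Equivalence of the individual KKT systems (plus market clearing and
`μ_M = 0`) with the aggregated KKT system (Proposition 4.2 of the paper). -/
theorem stmt13 {m N : ℕ} {n q s : Fin m → ℕ}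
    (A : ∀ k, Matrix (Fin (q k)) (Fin (n k)) ℝ) (a : ∀ k, Fin (q k) → ℝ)
    (B : ∀ k, Matrix (Fin (s k)) (Fin (n k)) ℝ) (b : ∀ k, Fin (s k) → ℝ)
    (M : ∀ k, Matrix (Fin N) (Fin (n k)) ℝ)
    (pi0 : ∀ k, Fin (n k) → ℝ)
    (lam : Fin m → ℝ) (hlam : ∀ k, 0 < lam k)
    (Qk : ∀ k, Matrix (Fin (n k)) (Fin (n k)) ℝ) (hQk : ∀ k, (Qk k).PosSemidef)
    (v : ∀ k, Fin (n k) → ℝ) (Pe : Fin N → ℝ)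
    (η : ∀ k, Fin (s k) → ℝ) (μk : ∀ k, Fin (q k) → ℝ) (μM : Fin N → ℝ)
    -- the concatenated primal, dual and data vectors
    (x : ((Σ k : Fin m, Fin (n k)) ⊕ Fin N) → ℝ)
    (hx : x = Sum.elim (fun pr => v pr.1 pr.2) Pe)
    (ηv : (Σ k : Fin m, Fin (s k)) → ℝ)
    (hηv : ηv = fun pr => η pr.1 pr.2)
    (μv : ((Σ k : Fin m, Fin (q k)) ⊕ Fin N) → ℝ)
    (hμv : μv = Sum.elim (fun pr => μk pr.1 pr.2) μM)
    (bigpi : ((Σ k : Fin m, Fin (n k)) ⊕ Fin N) → ℝ)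
    (hbigpi : bigpi = Sum.elim (fun pr => pi0 pr.1 pr.2) 0)
    (biga : ((Σ k : Fin m, Fin (q k)) ⊕ Fin N) → ℝ)
    (hbiga : biga = Sum.elim (fun pr => a pr.1 pr.2) 0)
    (bigb : (Σ k : Fin m, Fin (s k)) → ℝ)
    (hbigb : bigb = fun pr => b pr.1 pr.2) :
    -- individual KKT systems + market clearing + μ_M = 0
    ((∀ k : Fin m,
        -(pi0 k + (M k)ᵀ.mulVec Pe) - lam k • (Qk k).mulVec (v k)
            - (B k)ᵀ.mulVec (η k) - (A k)ᵀ.mulVec (μk k) = 0 ∧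
        η k ⬝ᵥ ((B k).mulVec (v k) - b k) = 0 ∧
        (B k).mulVec (v k) ≤ b k ∧
        (A k).mulVec (v k) = a k ∧
        0 ≤ η k) ∧
      (∑ k, (M k).mulVec (v k)) = 0 ∧ μM = 0) ↔
    -- aggregated KKT system
    (-bigpi - (bigQ lam Qk M).mulVec x - (bigB B)ᵀ.mulVec ηv
        - (bigA A M)ᵀ.mulVec μv = 0 ∧
      ηv ⬝ᵥ ((bigB B).mulVec x - bigb) = 0 ∧
      (bigB B).mulVec x ≤ bigb ∧
      (bigA A M).mulVec x = biga ∧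
      0 ≤ ηv ∧ μM = 0) := by
  subst hx hηv hμv hbigpi hbiga hbigb
  constructor
  · rintro ⟨hind, hmc, hμM⟩
    subst hμM
    refine ⟨?_, ?_, ?_, ?_, ?_, rfl⟩
    · funext i
      rcases i with ⟨k, i⟩ | r
      · have h1 := congrFun (hind k).1 i
        simp only [Pi.sub_apply, Pi.neg_apply, Pi.add_apply, Pi.smul_apply,
          smul_eq_mul, Pi.zero_apply] at h1 ⊢
        rw [bigQ_mulVec_inl, bigB_transpose_mulVec_inl, bigA_transpose_mulVec_inl]
        simp only [Matrix.mulVec_zero, Pi.zero_apply, Sum.elim_inl]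
        linarith
      · simp only [Pi.sub_apply, Pi.neg_apply, Pi.zero_apply, Sum.elim_inr]
        rw [bigQ_mulVec_inr, bigB_transpose_mulVec_inr, bigA_transpose_mulVec_inr]
        have := congrFun hmc r
        simp only [Finset.sum_apply, Pi.zero_apply] at this
        rw [this]
        ring
    · rw [big_comp_sum]
      exact Finset.sum_eq_zero fun k _ => (hind k).2.1
    · rintro ⟨k, r⟩
      rw [bigB_mulVec]
      exact (hind k).2.2.1 r
    · funext i
      rcases i with ⟨k, r⟩ | r
      · rw [bigA_mulVec_inl, Sum.elim_inl]
        exact congrFun (hind k).2.2.2.1 r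
      · rw [bigA_mulVec_inr, Sum.elim_inr]
        have := congrFun hmc r
        simpa using this
    · rintro ⟨k, r⟩
      exact (hind k).2.2.2.2 r
  · rintro ⟨hstat, hcomp, hineq, heq, hnn, hμM⟩
    subst hμM
    have hineq' : ∀ k r, ((B k).mulVec (v k)) r ≤ b k r := by
      intro k r
      have := hineq ⟨k, r⟩
      rwa [bigB_mulVec] at this
    have hnn' : ∀ k r, 0 ≤ η k r := fun k r => hnn ⟨k, r⟩
    have hcomp' : ∀ k, η k ⬝ᵥ ((B k).mulVec (v k) - b k) = 0 := by
      rw [big_comp_sum] at hcomp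
      intro k
      have key := (Finset.sum_eq_zero_iff_of_nonpos ?_).1 hcomp k (Finset.mem_univ k)
      · exact key
      · intro k' _
        apply Finset.sum_nonpos
        intro r _
        exact mul_nonpos_iff.2 (Or.inl ⟨hnn' k' r,
          sub_nonpos.mpr (hineq' k' r)⟩)
    refine ⟨fun k => ⟨?_, hcomp' k, fun r => hineq' k r, ?_, fun r => hnn' k r⟩, ?_, rfl⟩
    · funext i
      have h1 := congrFun hstat (Sum.inl ⟨k, i⟩)
      simp only [Pi.sub_apply, Pi.neg_apply, Pi.zero_apply, Sum.elim_inl] at h1 ⊢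
      rw [bigQ_mulVec_inl, bigB_transpose_mulVec_inl, bigA_transpose_mulVec_inl] at h1
      simp only [Matrix.mulVec_zero, Pi.zero_apply, Pi.add_apply, Pi.smul_apply,
        smul_eq_mul] at h1 ⊢
      linarith
    · funext r
      have := congrFun heq (Sum.inl ⟨k, r⟩)
      rwa [bigA_mulVec_inl, Sum.elim_inl] at this
    · funext r
      have := congrFun heq (Sum.inr r)
      rw [bigA_mulVec_inr, Sum.elim_inr] at this
      simpa using this
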